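/- Let E be a positive, sub-unital linear map on matrices (E(I) ≤ I). Then for any 0 ≤ W ≤ I, Kadison's inequality gives (E(W))² ≤ E(W²), and consequently for any states ρ, σ and ε ≥ 0, the quantity sup_{0≤W≤I} (Tr(Wρ) − ε)₊² / Tr(W²σ) is monotone non-increasing under any positive trace-non-increasing map applied to (ρ, σ). -/

import Mathlib

open Matrix
open scoped ComplexOrder ENNReal

/-- The dual variational quantity `sup_{0 ≤ W ≤ I} (Tr(Wρ) − ε)₊² / Tr(W²σ)`,
valued in `ℝ≥0∞` with the conventions `a/0 = ∞` for `a > 0` and `0/0 = 0`. -/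
noncomputable def dualQ {n : Type*} [Fintype n] [DecidableEq n]
    (ρ σ : Matrix n n ℂ) (ε : ℝ) : ℝ≥0∞ :=
  ⨆ W ∈ {W : Matrix n n ℂ | W.PosSemidef ∧ (1 - W).PosSemidef},
    ENNReal.ofReal (max (((W * ρ).trace).re - ε) 0 ^ 2) /
      ENNReal.ofReal (((W * W * σ).trace).re)

set_option linter.unusedSectionVars false
set_option maxHeartbeats 1000000

namespace KadisonAux
variable {n : Type*} [Fintype n] [DecidableEq n]
lemma diag_nonneg {M : Matrix n n ℂ} (hM : M.PosSemidef) (i : n) : 0 ≤ M i i := by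
  have := hM.dotProduct_mulVec_nonneg (Pi.single i 1)
  simpa [dotProduct, Pi.single_apply, mulVec, Finset.sum_ite_eq, Finset.sum_ite_eq'] using this

lemma trace_nonneg_c {M : Matrix n n ℂ} (hM : M.PosSemidef) : 0 ≤ M.trace := by
  unfold Matrix.trace
  exact Finset.sum_nonneg fun i _ => diag_nonneg hM i

lemma trace_mul_nonneg {A B : Matrix n n ℂ} (hA : A.PosSemidef) (hB : B.PosSemidef) :
    0 ≤ (A * B).trace := by
  obtain ⟨C, rfl⟩ : ∃ C : Matrix n n ℂ, A = Cᴴ * C := by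
    open scoped MatrixOrder in exact CStarAlgebra.nonneg_iff_eq_star_mul_self.mp hA.nonneg
  have h1 : (C * B * Cᴴ).trace = (Cᴴ * C * B).trace := Matrix.trace_mul_cycle C B Cᴴ
  rw [← h1]
  exact trace_nonneg_c (hB.mul_mul_conjTranspose_same C)

lemma vecMulVec_posSemidef (x : n → ℂ) : (vecMulVec x (star x)).PosSemidef := by
  refine Matrix.PosSemidef.of_dotProduct_mulVec_nonneg ?_ ?_
  · ext i j
    simp [vecMulVec_apply, mul_comm]
  · intro y
    have : star y ⬝ᵥ (vecMulVec x (star x) *ᵥ y) = star (star x ⬝ᵥ y) * (star x ⬝ᵥ y) := by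
      simp [vecMulVec_apply, dotProduct, mulVec, Finset.mul_sum, Finset.sum_mul]
      rw [Finset.sum_comm]
      apply Finset.sum_congr rfl; intro i _
      apply Finset.sum_congr rfl; intro j _
      ring
    rw [this]
    exact star_mul_self_nonneg _

lemma dot_eq_trace (M : Matrix n n ℂ) (x : n → ℂ) :
    star x ⬝ᵥ (M *ᵥ x) = (M * vecMulVec x (star x)).trace := by
  simp [Matrix.trace, Matrix.diag, Matrix.mul_apply, vecMulVec_apply, dotProduct, mulVec,
    Finset.mul_sum]
  apply Finset.sum_congr rfl; intro i _
  apply Finset.sum_congr rfl; intro j _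
  ring

lemma sum_mulVec {ι : Type*} (s : Finset ι) (M : ι → Matrix n n ℂ) (v : n → ℂ) :
    (∑ i ∈ s, M i) *ᵥ v = ∑ i ∈ s, M i *ᵥ v := by
  ext j
  simp only [mulVec, dotProduct, Matrix.sum_apply, Finset.sum_apply, Finset.sum_mul]
  exact Finset.sum_comm

lemma dotProduct_sum' {ι : Type*} (u : n → ℂ) (s : Finset ι) (w : ι → n → ℂ) :
    u ⬝ᵥ (∑ i ∈ s, w i) = ∑ i ∈ s, u ⬝ᵥ w i := by
  simp only [dotProduct, Finset.sum_apply, Finset.mul_sum]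
  exact Finset.sum_comm

lemma dot_sum_smul {ι : Type*} (s : Finset ι) (c : ι → ℂ) (Q : ι → Matrix n n ℂ)
    (u v : n → ℂ) :
    star u ⬝ᵥ ((∑ i ∈ s, c i • Q i) *ᵥ v) = ∑ i ∈ s, c i * (star u ⬝ᵥ (Q i *ᵥ v)) := by
  rw [sum_mulVec, dotProduct_sum']
  apply Finset.sum_congr rfl; intro i _
  rw [smul_mulVec, dotProduct_smul, smul_eq_mul]


lemma key {ι : Type*} [Fintype ι]
    (Q : ι → Matrix n n ℂ) (hQ : ∀ i, (Q i).PosSemidef)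
    (hS : (1 - ∑ i, Q i).PosSemidef) (lam : ι → ℝ) :
    ((∑ i, ((lam i : ℂ) ^ 2) • Q i)
      - (∑ i, (lam i : ℂ) • Q i) * (∑ i, (lam i : ℂ) • Q i)).PosSemidef := by
  set A := ∑ i, (lam i : ℂ) • Q i with hA
  set B := ∑ i, ((lam i : ℂ) ^ 2) • Q i with hB
  have hQh : ∀ i, (Q i).IsHermitian := fun i => (hQ i).1
  have hAherm : A.IsHermitian := by
    show Aᴴ = A
    rw [hA, Matrix.conjTranspose_sum]
    apply Finset.sum_congr rfl; intro i _
    rw [Matrix.conjTranspose_smul, (hQh i).eq]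
    norm_num
  have hBherm : B.IsHermitian := by
    show Bᴴ = B
    rw [hB, Matrix.conjTranspose_sum]
    apply Finset.sum_congr rfl; intro i _
    rw [Matrix.conjTranspose_smul, (hQh i).eq]
    norm_num
  have hA2herm : (A * A).IsHermitian := by
    show (A * A)ᴴ = A * A
    rw [Matrix.conjTranspose_mul, hAherm.eq]
  refine Matrix.PosSemidef.of_dotProduct_mulVec_nonneg ?_ ?_
  · exact hBherm.sub hA2herm
  · intro y
    set z := A *ᵥ y with hz
    set b := star y ⬝ᵥ (B *ᵥ y) with hb
    set q := star y ⬝ᵥ ((A * A) *ᵥ y) with hq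
    have hAz : star y ⬝ᵥ (A *ᵥ z) = q := by rw [hq, hz, ← Matrix.mulVec_mulVec]
    have ht : star z ⬝ᵥ z = q := by
      rw [hz, Matrix.star_mulVec, hAherm.eq, ← Matrix.dotProduct_mulVec,
        Matrix.mulVec_mulVec, ← hq]
    have hzAy : star z ⬝ᵥ (A *ᵥ y) = q := by rw [← hz, ht]
    -- the sum s
    set s := ∑ i, star ((lam i : ℂ) • y - z) ⬝ᵥ (Q i *ᵥ ((lam i : ℂ) • y - z)) with hs
    have hs0 : 0 ≤ s := Finset.sum_nonneg fun i _ => (hQ i).dotProduct_mulVec_nonneg _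
    have expand : ∀ i, star ((lam i : ℂ) • y - z) ⬝ᵥ (Q i *ᵥ ((lam i : ℂ) • y - z))
        = (lam i : ℂ) ^ 2 * (star y ⬝ᵥ (Q i *ᵥ y))
          - (lam i : ℂ) * (star y ⬝ᵥ (Q i *ᵥ z))
          - (lam i : ℂ) * (star z ⬝ᵥ (Q i *ᵥ y))
          + star z ⬝ᵥ (Q i *ᵥ z) := by
      intro i
      simp only [star_sub, star_smul, Matrix.mulVec_sub, Matrix.mulVec_smul,
        sub_dotProduct, dotProduct_sub, dotProduct_smul, smul_dotProduct,
        smul_eq_mul, Complex.star_def, Complex.conj_ofReal]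
      ring
    have hsum : s = b - 2 * q + star z ⬝ᵥ ((∑ i, Q i) *ᵥ z) := by
      rw [hs]
      rw [Finset.sum_congr rfl fun i _ => expand i]
      rw [Finset.sum_add_distrib, Finset.sum_sub_distrib, Finset.sum_sub_distrib]
      have e1 : ∑ i, (lam i : ℂ) ^ 2 * (star y ⬝ᵥ (Q i *ᵥ y)) = b := by
        rw [hb, hB, dot_sum_smul]
      have e2 : ∑ i, (lam i : ℂ) * (star y ⬝ᵥ (Q i *ᵥ z)) = q := by
        rw [← hAz, hA, dot_sum_smul]
      have e3 : ∑ i, (lam i : ℂ) * (star z ⬝ᵥ (Q i *ᵥ y)) = q := by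
        rw [← hzAy, hA, dot_sum_smul]
      have e4 : ∑ i, star z ⬝ᵥ (Q i *ᵥ z) = star z ⬝ᵥ ((∑ i, Q i) *ᵥ z) := by
        rw [sum_mulVec, dotProduct_sum']
      rw [e1, e2, e3, e4]
      ring
    set p := star z ⬝ᵥ ((1 - ∑ i, Q i) *ᵥ z) with hp
    have hp0 : 0 ≤ p := hS.dotProduct_mulVec_nonneg z
    have hpe : star z ⬝ᵥ ((∑ i, Q i) *ᵥ z) = q - p := by
      rw [hp, Matrix.sub_mulVec, dotProduct_sub, Matrix.one_mulVec, ht]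
      ring
    have hgoal : star y ⬝ᵥ ((B - A * A) *ᵥ y) = b - q := by
      rw [Matrix.sub_mulVec, dotProduct_sub, ← hb, ← hq]
    rw [hgoal]
    have : b - q = s + p := by rw [hsum, hpe]; ring
    rw [this]
    exact add_nonneg hs0 hp0




lemma diagonal_eq_sum (f : n → ℂ) :
    diagonal f = ∑ i, f i • diagonal (Pi.single i 1) := by
  ext j k
  by_cases h : j = k
  · subst h
    simp [Matrix.sum_apply, diagonal_apply, Pi.single_apply]
  · simp [Matrix.sum_apply, diagonal_apply_ne _ h, h]

lemma herm_decomp (H : Matrix n n ℂ) (hH : H.IsHermitian) :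
    ∃ (P : n → Matrix n n ℂ) (lam : n → ℝ),
      (∀ i, (P i).PosSemidef) ∧ (∑ i, P i = 1) ∧
      H = ∑ i, (lam i : ℂ) • P i ∧ H * H = ∑ i, ((lam i : ℂ) ^ 2) • P i := by
  set U : Matrix n n ℂ := (hH.eigenvectorUnitary : Matrix n n ℂ) with hU
  have hUU : U * star U = 1 := (Matrix.mem_unitaryGroup_iff).mp (hH.eigenvectorUnitary).2
  have hUU' : star U * U = 1 := (Matrix.mem_unitaryGroup_iff').mp (hH.eigenvectorUnitary).2
  set lam := hH.eigenvalues with hlam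
  have hco : (RCLike.ofReal ∘ lam : n → ℂ) = fun i => (lam i : ℂ) := rfl
  set D : Matrix n n ℂ := diagonal (fun i => (lam i : ℂ)) with hD
  have hspec : H = U * D * star U := by
    conv_lhs => rw [hH.spectral_theorem]
    rw [hco, Unitary.conjStarAlgAut_apply]
  have hds : ∑ i : n, diagonal (Pi.single i (1 : ℂ)) = (1 : Matrix n n ℂ) := by
    ext j k
    by_cases h : j = k
    · subst h
      simp [Matrix.sum_apply, diagonal_apply, Pi.single_apply]
    · simp [Matrix.sum_apply, diagonal_apply_ne _ h, h]
  refine ⟨fun i => U * diagonal (Pi.single i 1) * star U, lam, ?_, ?_, ?_, ?_⟩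
  · intro i
    refine Matrix.PosSemidef.mul_mul_conjTranspose_same ?_ U
    refine Matrix.posSemidef_diagonal_iff.mpr fun j => ?_
    by_cases h : j = i
    · subst h; simp
    · simp [Pi.single_apply, Ne.symm h, h]
  · have e : ∑ i : n, U * diagonal (Pi.single i (1 : ℂ)) * star U
        = U * (∑ i : n, diagonal (Pi.single i (1 : ℂ))) * star U := by
      rw [Matrix.mul_sum, Matrix.sum_mul]
    rw [e, hds, mul_one, hUU]
  · rw [hspec, hD, diagonal_eq_sum, Matrix.mul_sum, Matrix.sum_mul]
    apply Finset.sum_congr rfl; intro i _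
    rw [Matrix.mul_smul, Matrix.smul_mul]
  · have hDD : D * D = diagonal (fun i => (lam i : ℂ) ^ 2) := by
      rw [hD, Matrix.diagonal_mul_diagonal]
      exact congrArg diagonal (funext fun i => (sq ((lam i : ℂ))).symm)
    have h2 : H * H = U * (D * D) * star U := by
      rw [hspec]
      calc U * D * star U * (U * D * star U)
          = U * D * (star U * U) * D * star U := by simp only [Matrix.mul_assoc]
        _ = U * (D * D) * star U := by rw [hUU']; simp only [Matrix.mul_assoc, Matrix.mul_one]
    rw [h2, hDD, diagonal_eq_sum, Matrix.mul_sum, Matrix.sum_mul]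
    apply Finset.sum_congr rfl; intro i _
    rw [Matrix.mul_smul, Matrix.smul_mul]
/-- general Kadison inequality -/
lemma kadison_of (Φ : Matrix n n ℂ →ₗ[ℂ] Matrix n n ℂ)
    (hpos : ∀ A : Matrix n n ℂ, A.PosSemidef → (Φ A).PosSemidef)
    (hsub : (1 - Φ 1).PosSemidef)
    (W : Matrix n n ℂ) (hW : W.IsHermitian) :
    (Φ (W * W) - Φ W * Φ W).PosSemidef := by
  obtain ⟨P, lam, hP, hPsum, hW1, hW2⟩ := herm_decomp W hW
  have h1 : Φ W = ∑ i, (lam i : ℂ) • Φ (P i) := by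
    rw [hW1, map_sum]
    exact Finset.sum_congr rfl fun i _ => map_smul Φ _ _
  have h2 : Φ (W * W) = ∑ i, ((lam i : ℂ) ^ 2) • Φ (P i) := by
    rw [hW2, map_sum]
    exact Finset.sum_congr rfl fun i _ => map_smul Φ _ _
  have h3 : (1 - ∑ i, Φ (P i)).PosSemidef := by
    rw [← map_sum, hPsum]; exact hsub
  rw [h1, h2]
  exact key _ (fun i => hpos _ (hP i)) h3 lam

lemma herm_map (Φ : Matrix n n ℂ →ₗ[ℂ] Matrix n n ℂ)
    (hpos : ∀ A : Matrix n n ℂ, A.PosSemidef → (Φ A).PosSemidef)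
    {H : Matrix n n ℂ} (hH : H.IsHermitian) : (Φ H).IsHermitian := by
  obtain ⟨P, lam, hP, -, hH1, -⟩ := herm_decomp H hH
  have : Φ H = ∑ i, (lam i : ℂ) • Φ (P i) := by
    rw [hH1, map_sum]
    exact Finset.sum_congr rfl fun i _ => map_smul Φ _ _
  rw [this]
  show (∑ i, (lam i : ℂ) • Φ (P i))ᴴ = _
  rw [Matrix.conjTranspose_sum]
  apply Finset.sum_congr rfl; intro i _
  rw [Matrix.conjTranspose_smul, (hpos _ (hP i)).1.eq]
  norm_num

lemma map_conjTranspose (Φ : Matrix n n ℂ →ₗ[ℂ] Matrix n n ℂ)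
    (hpos : ∀ A : Matrix n n ℂ, A.PosSemidef → (Φ A).PosSemidef)
    (X : Matrix n n ℂ) : Φ Xᴴ = (Φ X)ᴴ := by
  obtain ⟨H, hH, K, hK, hX, hXH⟩ :
      ∃ H : Matrix n n ℂ, H.IsHermitian ∧ ∃ K : Matrix n n ℂ, K.IsHermitian ∧
        X = (2 : ℂ)⁻¹ • (H - Complex.I • K) ∧ Xᴴ = (2 : ℂ)⁻¹ • (H + Complex.I • K) := by
    refine ⟨X + Xᴴ, ?_, Complex.I • (X - Xᴴ), ?_, ?_, ?_⟩
    · show (X + Xᴴ)ᴴ = X + Xᴴ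
      rw [Matrix.conjTranspose_add, Matrix.conjTranspose_conjTranspose, add_comm]
    · show (Complex.I • (X - Xᴴ))ᴴ = Complex.I • (X - Xᴴ)
      rw [Matrix.conjTranspose_smul, Matrix.conjTranspose_sub,
        Matrix.conjTranspose_conjTranspose]
      ext i j
      simp [Complex.ext_iff]
    · ext i j
      simp [Matrix.smul_apply, Matrix.sub_apply, Matrix.add_apply, smul_eq_mul,
        Complex.ext_iff]
      ring_nf
      exact ⟨trivial, trivial⟩
    · ext i j
      simp [Matrix.smul_apply, Matrix.sub_apply, Matrix.add_apply, smul_eq_mul,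
        Complex.ext_iff]
      ring_nf
      exact ⟨trivial, trivial⟩
  have hFH := herm_map Φ hpos hH
  have hFK := herm_map Φ hpos hK
  have e1 : Φ X = (2 : ℂ)⁻¹ • (Φ H - Complex.I • Φ K) := by
    rw [hX, _root_.map_smul, map_sub, _root_.map_smul]
  have e2 : Φ Xᴴ = (2 : ℂ)⁻¹ • (Φ H + Complex.I • Φ K) := by
    rw [hXH, _root_.map_smul, map_add, _root_.map_smul]
  rw [e1, e2, Matrix.conjTranspose_smul, Matrix.conjTranspose_sub, Matrix.conjTranspose_smul,
    hFH.eq, hFK.eq]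
  ext i j
  simp [Matrix.smul_apply, Matrix.sub_apply, Matrix.add_apply, smul_eq_mul, Complex.ext_iff]

/-- the Hilbert-Schmidt adjoint -/
noncomputable def adj (F : Matrix n n ℂ →ₗ[ℂ] Matrix n n ℂ) :
    Matrix n n ℂ →ₗ[ℂ] Matrix n n ℂ where
  toFun A := Matrix.of fun k l => (A * F (single l k 1)).trace
  map_add' A B := by
    ext k l
    simp [Matrix.add_mul]
  map_smul' c A := by
    ext k l
    simp [Matrix.smul_mul]

lemma adj_trace (F : Matrix n n ℂ →ₗ[ℂ] Matrix n n ℂ) (A B : Matrix n n ℂ) :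
    (adj F A * B).trace = (A * F B).trace := by
  have htr : ∀ M N : Matrix n n ℂ, (M * N).trace = ∑ k, ∑ l, M k l * N l k := by
    intro M N
    simp [Matrix.trace, Matrix.diag, Matrix.mul_apply]
  rw [htr]
  have hB : B = ∑ l, ∑ k, B l k • single l k 1 := by
    conv_lhs => rw [Matrix.matrix_eq_sum_single B]
    apply Finset.sum_congr rfl; intro l _
    apply Finset.sum_congr rfl; intro k _
    rw [Matrix.smul_single, smul_eq_mul, mul_one]
  conv_rhs => rw [hB]
  rw [map_sum, Finset.mul_sum, Matrix.trace_sum]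
  rw [Finset.sum_comm]
  apply Finset.sum_congr rfl; intro k _
  rw [map_sum, Finset.mul_sum, Matrix.trace_sum]
  apply Finset.sum_congr rfl; intro l _
  rw [_root_.map_smul, Matrix.mul_smul, Matrix.trace_smul, smul_eq_mul,
    mul_comm ((adj F) A l k) (B k l)]
  rfl

lemma adj_posSemidef {F : Matrix n n ℂ →ₗ[ℂ] Matrix n n ℂ}
    (hpos : ∀ A : Matrix n n ℂ, A.PosSemidef → (F A).PosSemidef)
    {A : Matrix n n ℂ} (hA : A.PosSemidef) : (adj F A).PosSemidef := by
  refine Matrix.PosSemidef.of_dotProduct_mulVec_nonneg ?_ ?_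
  · show (adj F A)ᴴ = adj F A
    ext k l
    show star (adj F A l k) = adj F A k l
    show star ((A * F (single k l 1)).trace) = (A * F (single l k 1)).trace
    have h1 : star ((A * F (single k l 1)).trace)
        = ((A * F (single k l 1))ᴴ).trace := by
      rw [Matrix.trace_conjTranspose]
    rw [h1, Matrix.conjTranspose_mul, ← map_conjTranspose F hpos, hA.1.eq]
    have h2 : (single k l (1:ℂ))ᴴ = single l k 1 := by
      ext i j
      simp [Matrix.single, Matrix.conjTranspose_apply, and_comm]
    rw [h2, Matrix.trace_mul_comm]
  · intro x
    rw [dot_eq_trace, adj_trace]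
    exact trace_mul_nonneg hA (hpos _ (vecMulVec_posSemidef x))

lemma adj_subunital {F : Matrix n n ℂ →ₗ[ℂ] Matrix n n ℂ}
    (hpos : ∀ A : Matrix n n ℂ, A.PosSemidef → (F A).PosSemidef)
    (htr : ∀ A : Matrix n n ℂ, A.PosSemidef → ((F A).trace).re ≤ (A.trace).re) :
    (1 - adj F 1).PosSemidef := by
  refine Matrix.PosSemidef.of_dotProduct_mulVec_nonneg ?_ ?_
  · exact Matrix.isHermitian_one.sub (adj_posSemidef hpos Matrix.PosSemidef.one).1
  · intro x
    set M := vecMulVec x (star x) with hM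
    have hMpsd := vecMulVec_posSemidef x
    have h1 : star x ⬝ᵥ ((1 - adj F 1) *ᵥ x) = M.trace - (F M).trace := by
      rw [Matrix.sub_mulVec, dotProduct_sub, dot_eq_trace 1 x, dot_eq_trace (adj F 1) x,
        ← hM, Matrix.one_mul, adj_trace, Matrix.one_mul]
    rw [h1]
    have h2 := trace_nonneg_c hMpsd
    have h3 := trace_nonneg_c (hpos _ hMpsd)
    have h4 := htr M hMpsd
    rw [Complex.le_def] at h2 h3 ⊢
    constructor
    · simp only [Complex.sub_re, Complex.zero_re]
      linarith [h4]
    · simp only [Complex.sub_im, Complex.zero_im]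
      rw [← h2.2, ← h3.2]
      simp



end KadisonAux

open KadisonAux in
theorem kadison_and_dualQ_monotone {n : Type*} [Fintype n] [DecidableEq n]
    (E : Matrix n n ℂ →ₗ[ℂ] Matrix n n ℂ)
    (hEpos : ∀ A : Matrix n n ℂ, A.PosSemidef → (E A).PosSemidef)
    (hEsub : (1 - E 1).PosSemidef) :
    (∀ W : Matrix n n ℂ, W.PosSemidef → (1 - W).PosSemidef →
        (E (W * W) - E W * E W).PosSemidef) ∧
      (∀ F : Matrix n n ℂ →ₗ[ℂ] Matrix n n ℂ,
        (∀ A : Matrix n n ℂ, A.PosSemidef → (F A).PosSemidef) →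
        (∀ A : Matrix n n ℂ, A.PosSemidef → ((F A).trace).re ≤ (A.trace).re) →
        ∀ (ρ σ : Matrix n n ℂ), ρ.PosSemidef → ρ.trace = 1 → σ.PosSemidef → σ.trace = 1 →
        ∀ ε : ℝ, 0 ≤ ε → dualQ (F ρ) (F σ) ε ≤ dualQ ρ σ ε) := by
  constructor
  · intro W hW1 _hW2
    exact kadison_of E hEpos hEsub W hW1.1
  · intro F hFpos hFtr ρ σ hρ _hρ1 hσ _hσ1 ε _hε
    simp only [dualQ]
    refine iSup₂_le fun W hW => ?_
    obtain ⟨hW1, hW2⟩ := hW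
    set V := adj F W with hV
    have hV1 : V.PosSemidef := adj_posSemidef hFpos hW1
    have hV2 : (1 - V).PosSemidef := by
      have h := (adj_subunital hFpos hFtr).add (adj_posSemidef hFpos hW2)
      have e : (1 - adj F 1) + adj F (1 - W) = 1 - V := by
        rw [map_sub]; abel
      rwa [e] at h
    have hnum : ((W * F ρ).trace).re = ((V * ρ).trace).re := by
      rw [hV, adj_trace]
    have hden : ((V * V * σ).trace).re ≤ ((W * W * F σ).trace).re := by
      have h1 : (W * W * F σ).trace = (adj F (W * W) * σ).trace := (adj_trace F (W * W) σ).symm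
      have hkad : (adj F (W * W) - V * V).PosSemidef :=
        kadison_of (adj F) (fun A hA => adj_posSemidef hFpos hA)
          (adj_subunital hFpos hFtr) W hW1.1
      have h3 : 0 ≤ (((adj F (W * W) - V * V) * σ).trace) := trace_mul_nonneg hkad hσ
      have h4 : (adj F (W * W) * σ).trace
          = (V * V * σ).trace + (((adj F (W * W) - V * V)) * σ).trace := by
        rw [← Matrix.trace_add, ← Matrix.add_mul, add_sub_cancel]
      rw [Complex.le_def] at h3
      rw [h1, h4]
      simp only [Complex.add_re]
      have := h3.1
      simp only [Complex.zero_re] at this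
      linarith
    refine le_trans ?_ (le_iSup₂ (f := fun (W : Matrix n n ℂ)
        (_ : W ∈ {W : Matrix n n ℂ | W.PosSemidef ∧ (1 - W).PosSemidef}) =>
        ENNReal.ofReal (max (((W * ρ).trace).re - ε) 0 ^ 2) /
          ENNReal.ofReal (((W * W * σ).trace).re)) V ⟨hV1, hV2⟩)
    exact ENNReal.div_le_div (le_of_eq (by rw [hnum])) (ENNReal.ofReal_le_ofReal hden)
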